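/- Let K^A = K^B = K and define q_t as follows: q_0 = 1/(2K−1), q_1 = 1/2, and for 2 ≤ t ≤ 2K−1, q_t = r(t−1)/r(t) where r(t) = (⌈(t+1)/2⌉ + ⌊(t+1)/2⌋)K − ⌊(t+1)/2⌋⌈(t+1)/2⌉. Define P_K(t) = ∏_{j=0}^{t} (1 − q_j). Then for each fixed t ≥ 0, as K → ∞, P_K(t) → 1/(t+1)!. -/

import Mathlib

open Filter

lemma linlim (a b c d : ℝ) (hb : 0 < b) :
    Tendsto (fun K : ℕ => (a * K - c) / (b * K - d)) atTop (nhds (a / b)) := by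
  have hc : Tendsto (fun K : ℕ => (c : ℝ) / K) atTop (nhds 0) :=
    tendsto_const_div_atTop_nhds_zero_nat c
  have hd : Tendsto (fun K : ℕ => (d : ℝ) / K) atTop (nhds 0) :=
    tendsto_const_div_atTop_nhds_zero_nat d
  have h0 : Tendsto (fun K : ℕ => (a - c / K) / (b - d / K)) atTop (nhds (a / b)) := by
    have ha : Tendsto (fun _ : ℕ => a) atTop (nhds a) := tendsto_const_nhds
    have hbb : Tendsto (fun _ : ℕ => b) atTop (nhds b) := tendsto_const_nhds
    have := (ha.sub hc).div (hbb.sub hd) (by simpa using hb.ne')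
    rw [sub_zero, sub_zero] at this
    exact this
  refine h0.congr' ?_
  filter_upwards [eventually_ge_atTop 1] with K hK
  have hK0 : (K : ℝ) ≠ 0 := by
    exact_mod_cast (by omega : K ≠ 0)
  calc (a - c / K) / (b - d / K)
      = ((a - c / K) * K) / ((b - d / K) * K) := (mul_div_mul_right _ _ hK0).symm
    _ = (a * K - c) / (b * K - d) := by
        rw [sub_mul, div_mul_cancel₀ _ hK0, sub_mul, div_mul_cancel₀ _ hK0]

theorem survival_prob_tendsto_factorial
    (r : ℕ → ℕ → ℝ)
    (hr : ∀ K t, r K t = (((t + 2) / 2 : ℕ) + ((t + 1) / 2 : ℕ)) * K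
      - ((t + 1) / 2 : ℕ) * ((t + 2) / 2 : ℕ))
    (q : ℕ → ℕ → ℝ)
    (hq0 : ∀ K, q K 0 = 1 / (2 * K - 1))
    (hq1 : ∀ K, q K 1 = 1 / 2)
    (hqt : ∀ K t, 2 ≤ t → q K t = r K (t - 1) / r K t) :
    ∀ t : ℕ, Tendsto (fun K : ℕ => ∏ j ∈ Finset.range (t + 1), (1 - q K j))
      atTop (nhds (1 / (Nat.factorial (t + 1) : ℝ))) := by
  have key : ∀ s : ℕ, 1 ≤ s →
      Tendsto (fun K : ℕ => 1 - q K s) atTop (nhds (1 / ((s : ℝ) + 1))) := by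
    intro s hs
    rcases eq_or_lt_of_le hs with h1 | h2
    · -- s = 1
      subst h1
      simp only [hq1]
      have : (1 : ℝ) - 1 / 2 = 1 / ((1 : ℕ) + 1 : ℝ) := by norm_num
      rw [this]
      exact tendsto_const_nhds
    · -- 2 ≤ s
      have hs2 : 2 ≤ s := h2
      have e1 : ∀ K : ℕ, r K (s - 1) =
          (s : ℝ) * K - ((s / 2 : ℕ) * ((s + 1) / 2 : ℕ) : ℕ) := by
        intro K
        rw [hr]
        have h1 : s - 1 + 2 = s + 1 := by omega
        have h2 : s - 1 + 1 = s := by omega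
        rw [h1, h2]
        have h3 : (((s + 1) / 2 : ℕ) : ℝ) + ((s / 2 : ℕ) : ℝ) = (s : ℝ) := by
          rw [← Nat.cast_add]
          norm_cast
          omega
        rw [h3]
        push_cast
        ring
      have e2 : ∀ K : ℕ, r K s =
          ((s : ℝ) + 1) * K - (((s + 1) / 2 : ℕ) * ((s + 2) / 2 : ℕ) : ℕ) := by
        intro K
        rw [hr]
        have h3 : (((s + 2) / 2 : ℕ) : ℝ) + (((s + 1) / 2 : ℕ) : ℝ) = (s : ℝ) + 1 := by
          rw [← Nat.cast_add]
          norm_cast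
          omega
        rw [h3]
        push_cast
        ring
      have hq : ∀ K : ℕ, q K s =
          ((s : ℝ) * K - ((s / 2 : ℕ) * ((s + 1) / 2 : ℕ) : ℕ)) /
            (((s : ℝ) + 1) * K - (((s + 1) / 2 : ℕ) * ((s + 2) / 2 : ℕ) : ℕ)) := by
        intro K
        rw [hqt K s hs2, e1, e2]
      have hlim := linlim (s : ℝ) ((s : ℝ) + 1)
        (((s / 2 : ℕ) * ((s + 1) / 2 : ℕ) : ℕ) : ℝ)
        ((((s + 1) / 2 : ℕ) * ((s + 2) / 2 : ℕ) : ℕ) : ℝ)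
        (by positivity)
      have hone : Tendsto (fun _ : ℕ => (1 : ℝ)) atTop (nhds 1) := tendsto_const_nhds
      have := hone.sub hlim
      have hval : (1 : ℝ) - (s : ℝ) / ((s : ℝ) + 1) = 1 / ((s : ℝ) + 1) := by
        have : (s : ℝ) + 1 ≠ 0 := by positivity
        field_simp
        ring
      rw [hval] at this
      refine this.congr fun K => ?_
      rw [hq K]
  intro t
  induction t with
  | zero =>
    have h := linlim (0 : ℝ) 2 (-1) 1 two_pos
    have h' : Tendsto (fun K : ℕ => 1 - q K 0) atTop (nhds 1) := by
      have hone : Tendsto (fun _ : ℕ => (1 : ℝ)) atTop (nhds 1) := tendsto_const_nhds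
      have := hone.sub h
      norm_num at this
      refine this.congr fun K => ?_
      rw [hq0]
      norm_num
    simpa [Nat.factorial] using h'
  | succ t ih =>
    have hval : (1 / (Nat.factorial (t + 1 + 1) : ℝ)) =
        1 / (Nat.factorial (t + 1) : ℝ) * (1 / (((t + 1 : ℕ) : ℝ) + 1)) := by
      rw [Nat.factorial_succ]
      have h1 : (Nat.factorial (t + 1) : ℝ) ≠ 0 := by
        exact_mod_cast (Nat.factorial_pos (t + 1)).ne'
      have h2 : ((t + 1 : ℕ) : ℝ) + 1 ≠ 0 := by positivity
      push_cast
      field_simp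
    rw [hval]
    have := ih.mul (key (t + 1) (by omega))
    refine this.congr fun K => ?_
    exact (Finset.prod_range_succ _ _).symm
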